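/- arXiv:1711.00246 — 3 statements merged into one kernel-verified Lean document; each statement's English description precedes it below -/
import Mathlib

section
/- For all integers 0 ≤ s ≤ n, the increments of the state satisfy ‖Y_{n+1} − Y_n‖ ≤ r·e^{−δ(n−s)}·‖Y_{s+1} − Y_s‖ + (r/(1−e^{−δ}))·‖D‖·max_{s≤g≤n−1} |v_{g+1} − v_g| (where the maximum over the empty range is taken to be 0). -/
private lemma state_identity {d : ℕ}
    (C : EuclideanSpace ℝ (Fin d) →L[ℝ] EuclideanSpace ℝ (Fin d))
    (D : EuclideanSpace ℝ (Fin d)) (v : ℕ → ℝ) (Y : ℕ → EuclideanSpace ℝ (Fin d))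
    (hY : ∀ k : ℕ, Y (k + 1) = C (Y k) + v k • D) (s : ℕ) :
    ∀ m : ℕ, Y (s + m + 1) - Y (s + m)
      = (C ^ m) (Y (s + 1) - Y s)
        + ∑ g ∈ Finset.range m, (v (s + g + 1) - v (s + g)) • ((C ^ (m - 1 - g)) D) := by
  intro m
  induction m with
  | zero => simp
  | succ m ih =>
    have step : Y (s + (m + 1) + 1) - Y (s + (m + 1))
        = C (Y (s + m + 1) - Y (s + m)) + (v (s + m + 1) - v (s + m)) • D := by
      have h1 := hY (s + m + 1)
      have h2 := hY (s + m)
      have : s + (m + 1) + 1 = s + m + 1 + 1 := by ring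
      rw [this, h1]
      have : s + (m + 1) = s + m + 1 := by ring
      rw [this, h2, map_sub, sub_smul]
      abel
    rw [step, ih, map_add, map_sum, Finset.sum_range_succ]
    have hpow : ∀ x, C ((C ^ m) x) = (C ^ (m + 1)) x := by
      intro x; rw [pow_succ']; rfl
    have hterm : ∀ g ∈ Finset.range m,
        C ((v (s + g + 1) - v (s + g)) • ((C ^ (m - 1 - g)) D))
          = (v (s + g + 1) - v (s + g)) • ((C ^ (m + 1 - 1 - g)) D) := by
      intro g hg
      rw [Finset.mem_range] at hg
      rw [map_smul]
      congr 1
      have h : m + 1 - 1 - g = (m - 1 - g) + 1 := by omega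
      rw [h, pow_succ']
      rfl
    rw [Finset.sum_congr rfl hterm, hpow]
    have : m + 1 - 1 - m = 0 := by omega
    rw [this, pow_zero]
    simp only [ContinuousLinearMap.one_apply]
    abel

/-- Increment estimate for a stable linear block: for `0 ≤ s ≤ n`,
`‖Y_{n+1} − Y_n‖ ≤ r e^{−δ(n−s)} ‖Y_{s+1} − Y_s‖
  + (r/(1−e^{−δ})) ‖D‖ · max_{s ≤ g ≤ n−1} |v_{g+1} − v_g|`. -/
theorem state_increment_bound {d : ℕ} (hd : 0 < d)
    (C : EuclideanSpace ℝ (Fin d) →L[ℝ] EuclideanSpace ℝ (Fin d))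
    (D : EuclideanSpace ℝ (Fin d)) (r δ : ℝ) (hr : 0 < r) (hδ : 0 < δ)
    (hC : ∀ j : ℕ, ‖C ^ j‖ ≤ r * Real.exp (-δ * j))
    (v : ℕ → ℝ) (Y : ℕ → EuclideanSpace ℝ (Fin d))
    (hY : ∀ k : ℕ, Y (k + 1) = C (Y k) + v k • D)
    (n s : ℕ) (hn : 0 < n) (hs : s ≤ n) :
    ‖Y (n + 1) - Y n‖ ≤ r * Real.exp (-δ * ((n : ℝ) - s)) * ‖Y (s + 1) - Y s‖ +
      r / (1 - Real.exp (-δ)) * ‖D‖ * ⨆ g ∈ Finset.Icc s (n - 1), |v (g + 1) - v g| := by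
  set S := Finset.Icc s (n - 1) with hS
  set M : ℝ := ⨆ g ∈ S, |v (g + 1) - v g| with hM
  set x := Real.exp (-δ) with hx
  have hx0 : 0 < x := Real.exp_pos _
  have hx1 : x < 1 := Real.exp_lt_one_iff.mpr (by linarith)
  have hxx : 0 < 1 - x := by linarith
  -- bounds on the iSup M
  have hbdd : BddAbove (Set.range fun g => ⨆ _ : g ∈ S, |v (g + 1) - v g|) := by
    refine ⟨∑ g ∈ S, |v (g + 1) - v g|, ?_⟩
    rintro y ⟨g, rfl⟩
    by_cases hg : g ∈ S
    · show (⨆ _ : g ∈ S, |v (g + 1) - v g|) ≤ _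
      rw [ciSup_pos hg]
      exact Finset.single_le_sum (f := fun g => |v (g + 1) - v g|) (fun i _ => abs_nonneg _) hg
    · show (⨆ _ : g ∈ S, |v (g + 1) - v g|) ≤ _
      haveI : IsEmpty (g ∈ S) := ⟨hg⟩
      rw [iSup_of_empty', Real.sSup_empty]
      exact Finset.sum_nonneg fun i _ => abs_nonneg _
  have hMle : ∀ g ∈ S, |v (g + 1) - v g| ≤ M := by
    intro g hg
    have := le_ciSup hbdd g
    rwa [ciSup_pos hg] at this
  have hM0 : 0 ≤ M := by
    have := le_ciSup hbdd n
    have hnS : n ∉ S := by simp [hS, Finset.mem_Icc]; omega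
    haveI h' : IsEmpty (n ∈ S) := ⟨hnS⟩
    rwa [iSup_of_empty', Real.sSup_empty] at this
  -- the identity
  set m := n - s with hm
  have hsm : s + m = n := by omega
  have hid := state_identity C D v Y hY s m
  rw [hsm] at hid
  -- norm bounds
  have hDnn : (0:ℝ) ≤ ‖D‖ := norm_nonneg _
  have key : ‖Y (n + 1) - Y n‖
      ≤ r * x ^ m * ‖Y (s + 1) - Y s‖ + ∑ g ∈ Finset.range m, M * (r * x ^ (m - 1 - g)) * ‖D‖ := by
    rw [hid]
    refine (norm_add_le _ _).trans (add_le_add ?_ ?_)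
    · calc ‖(C ^ m) (Y (s + 1) - Y s)‖ ≤ ‖C ^ m‖ * ‖Y (s + 1) - Y s‖ :=
            ContinuousLinearMap.le_opNorm _ _
        _ ≤ r * x ^ m * ‖Y (s + 1) - Y s‖ := by
            have := hC m
            rw [hx, ← Real.exp_nat_mul]
            have h' : r * Real.exp (-δ * m) = r * Real.exp ((m:ℝ) * -δ) := by ring_nf
            apply mul_le_mul_of_nonneg_right _ (norm_nonneg _)
            rw [mul_comm (m:ℝ) (-δ)]
            exact this
    · refine (norm_sum_le _ _).trans (Finset.sum_le_sum ?_)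
      intro g hg
      have hgm : g < m := Finset.mem_range.mp hg
      have hgS : s + g ∈ S := by simp [hS, Finset.mem_Icc]; omega
      have hv : |v (s + g + 1) - v (s + g)| ≤ M := hMle _ hgS
      calc ‖(v (s + g + 1) - v (s + g)) • ((C ^ (m - 1 - g)) D)‖
          = |v (s + g + 1) - v (s + g)| * ‖(C ^ (m - 1 - g)) D‖ := by
            rw [norm_smul, Real.norm_eq_abs]
        _ ≤ |v (s + g + 1) - v (s + g)| * (‖C ^ (m - 1 - g)‖ * ‖D‖) :=
            mul_le_mul_of_nonneg_left (ContinuousLinearMap.le_opNorm _ _) (abs_nonneg _)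
        _ ≤ M * ((r * x ^ (m - 1 - g)) * ‖D‖) := by
            refine mul_le_mul hv ?_ (by positivity) hM0
            refine mul_le_mul_of_nonneg_right ?_ hDnn
            have := hC (m - 1 - g)
            rw [hx, ← Real.exp_nat_mul, mul_comm ((m - 1 - g : ℕ):ℝ) (-δ)]
            exact this
        _ = M * (r * x ^ (m - 1 - g)) * ‖D‖ := by ring
  -- geometric sum bound
  have hgeom : ∑ g ∈ Finset.range m, x ^ (m - 1 - g) ≤ 1 / (1 - x) := by
    have hrefl := Finset.sum_range_reflect (fun j => x ^ j) m
    rw [hrefl, geom_sum_eq (ne_of_lt hx1) m]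
    have h1 : (x ^ m - 1) / (x - 1) = (1 - x ^ m) / (1 - x) := by
      rw [← neg_div_neg_eq]; ring_nf
    rw [h1]
    have h2 : 0 ≤ x ^ m := by positivity
    rw [div_le_div_iff₀ hxx hxx]
    nlinarith
  -- assemble
  have hsum : ∑ g ∈ Finset.range m, M * (r * x ^ (m - 1 - g)) * ‖D‖
      ≤ r / (1 - x) * ‖D‖ * M := by
    calc ∑ g ∈ Finset.range m, M * (r * x ^ (m - 1 - g)) * ‖D‖
        = M * r * ‖D‖ * ∑ g ∈ Finset.range m, x ^ (m - 1 - g) := by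
          rw [Finset.mul_sum]; apply Finset.sum_congr rfl; intro g _; ring
      _ ≤ M * r * ‖D‖ * (1 / (1 - x)) := by
          apply mul_le_mul_of_nonneg_left hgeom (by positivity)
      _ = r / (1 - x) * ‖D‖ * M := by field_simp
  have hxm : r * x ^ m * ‖Y (s + 1) - Y s‖
      = r * Real.exp (-δ * ((n : ℝ) - s)) * ‖Y (s + 1) - Y s‖ := by
    rw [hx, ← Real.exp_nat_mul]
    congr 2
    have : ((m : ℕ) : ℝ) = (n : ℝ) - s := by
      rw [hm]; push_cast [Nat.cast_sub hs]; ring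
    rw [this]; ring
  rw [← hxm]
  exact key.trans (add_le_add le_rfl hsum)
end

section
/- If the input sequence converges, v_k → v as k → ∞, then I − C is invertible and the state converges: Y_k → (I − C)^{−1}(v·D) as k → ∞. -/
open Filter Finset

private lemma geom_tail_sum {q : ℝ} (hq0 : 0 ≤ q) (hq1 : q < 1) (k : ℕ) :
    ∑ i ∈ range k, q ^ (k - 1 - i) ≤ (1 - q)⁻¹ := by
  have h1 : ∑ i ∈ range k, q ^ (k - 1 - i) = ∑ i ∈ range k, q ^ i := by
    rw [← Finset.sum_range_reflect]
    apply Finset.sum_congr rfl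
    intro i hi
    simp only [Finset.mem_range] at hi
    congr 1
    omega
  rw [h1, ← tsum_geometric_of_lt_one hq0 hq1]
  exact Summable.sum_le_tsum (range k) (fun i _ => pow_nonneg hq0 i) (summable_geometric_of_lt_one hq0 hq1)

private lemma decay_lemma {X : Type*} [NormedAddCommGroup X] [NormedSpace ℝ X]
    (C : X →L[ℝ] X) (r δ : ℝ) (hr : 0 < r) (hδ : 0 < δ)
    (hC : ∀ j : ℕ, ‖C ^ j‖ ≤ r * Real.exp (-δ * j))
    (u : ℕ → X) (hu : Tendsto u atTop (nhds 0))
    (E : ℕ → X) (hE : ∀ k, E (k + 1) = C (E k) + u k) :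
    Tendsto E atTop (nhds 0) := by
  set q : ℝ := Real.exp (-δ) with hqdef
  have hq0 : 0 < q := Real.exp_pos _
  have hq1 : q < 1 := by
    rw [hqdef, Real.exp_lt_one_iff]; linarith
  have hCq : ∀ j : ℕ, ‖C ^ j‖ ≤ r * q ^ j := by
    intro j
    have := hC j
    rw [hqdef, ← Real.exp_nat_mul, mul_comm (j:ℝ) (-δ)]
    exact this
  -- explicit formula
  have key : ∀ N k : ℕ, E (N + k) = (C ^ k) (E N) + ∑ i ∈ range k, (C ^ (k - 1 - i)) (u (N + i)) := by
    intro N k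
    induction k with
    | zero => simp
    | succ k ih =>
      have : N + (k + 1) = (N + k) + 1 := by ring
      rw [this, hE, ih, map_add, map_sum, Finset.sum_range_succ]
      have h1 : C ((C ^ k) (E N)) = (C ^ (k + 1)) (E N) := by
        rw [pow_succ', ContinuousLinearMap.mul_apply]
      have h2 : ∀ i ∈ range k, C ((C ^ (k - 1 - i)) (u (N + i))) = (C ^ (k + 1 - 1 - i)) (u (N + i)) := by
        intro i hi
        simp only [Finset.mem_range] at hi
        have : k + 1 - 1 - i = (k - 1 - i) + 1 := by omega
        rw [this, pow_succ', ContinuousLinearMap.mul_apply]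
      rw [h1, Finset.sum_congr rfl h2]
      have h3 : (C ^ (k + 1 - 1 - k)) (u (N + k)) = u (N + k) := by
        have : k + 1 - 1 - k = 0 := by omega
        rw [this, pow_zero, ContinuousLinearMap.one_apply]
      rw [h3]
      abel
  rw [NormedAddCommGroup.tendsto_nhds_zero]
  intro ε hε
  have h1q : 0 < 1 - q := by linarith
  set ε1 : ℝ := ε * (1 - q) / (2 * r) with hε1def
  have hε1 : 0 < ε1 := by positivity
  rw [NormedAddCommGroup.tendsto_nhds_zero] at hu
  obtain ⟨N, hN⟩ := (hu ε1 hε1).exists_forall_of_atTop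
  -- choose K
  have hto0 : Tendsto (fun k : ℕ => r * q ^ k * ‖E N‖) atTop (nhds 0) := by
    have := tendsto_pow_atTop_nhds_zero_of_lt_one (le_of_lt hq0) hq1
    have h := (this.const_mul r).mul_const ‖E N‖
    simpa using h
  obtain ⟨K, hK⟩ := (Metric.tendsto_atTop.mp hto0 (ε/2) (by positivity))
  filter_upwards [eventually_ge_atTop (N + K)] with m hm
  obtain ⟨k, rfl⟩ : ∃ k, m = N + k := ⟨m - N, by omega⟩
  have hkK : K ≤ k := by omega
  rw [key]
  calc ‖(C ^ k) (E N) + ∑ i ∈ range k, (C ^ (k - 1 - i)) (u (N + i))‖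
      ≤ ‖(C ^ k) (E N)‖ + ‖∑ i ∈ range k, (C ^ (k - 1 - i)) (u (N + i))‖ := norm_add_le _ _
    _ ≤ r * q ^ k * ‖E N‖ + ∑ i ∈ range k, (r * q ^ (k - 1 - i)) * ε1 := by
        apply add_le_add
        · exact le_trans ((C ^ k).le_opNorm _) (mul_le_mul_of_nonneg_right (hCq k) (norm_nonneg _))
        · refine le_trans (norm_sum_le _ _) (Finset.sum_le_sum fun i hi => ?_)
          refine le_trans ((C ^ (k-1-i)).le_opNorm _) ?_
          have h1 : ‖u (N + i)‖ ≤ ε1 := le_of_lt (hN (N + i) (by omega))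
          have h2 : ‖C ^ (k-1-i)‖ ≤ r * q ^ (k-1-i) := hCq _
          exact mul_le_mul h2 h1 (norm_nonneg _) (by positivity)
    _ ≤ r * q ^ k * ‖E N‖ + (r * ε1) * (1 - q)⁻¹ := by
        have : ∑ i ∈ range k, (r * q ^ (k - 1 - i)) * ε1
            = (r * ε1) * ∑ i ∈ range k, q ^ (k - 1 - i) := by
          rw [Finset.mul_sum]; apply Finset.sum_congr rfl; intro i _; ring
        rw [this]
        have hg := geom_tail_sum (le_of_lt hq0) hq1 k
        gcongr
    _ < ε / 2 + ε / 2 := by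
        apply add_lt_add_of_lt_of_le
        · have := hK k hkK
          rw [Real.dist_eq, sub_zero] at this
          calc r * q ^ k * ‖E N‖ ≤ |r * q ^ k * ‖E N‖| := le_abs_self _
            _ < ε / 2 := this
        · rw [hε1def]
          rw [show r * (ε * (1 - q) / (2 * r)) * (1 - q)⁻¹ = ε / 2 * ((1-q) * (1-q)⁻¹) * (r / r) by ring]
          rw [mul_inv_cancel₀ (ne_of_gt h1q), div_self (ne_of_gt hr)]
          ring_nf
          exact le_refl _
    _ = ε := by ring

/-- Steady-state convergence for a stable linear block: if `‖C^j‖ ≤ r e^{−δ j}`,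
`Y_{k+1} = C Y_k + v_k • D` and `v_k → v`, then `I − C` is invertible and
`Y_k → (I − C)⁻¹ (v • D)`. -/
theorem state_space_steady_state {n : ℕ} (hn : 0 < n)
    (C : EuclideanSpace ℝ (Fin n) →L[ℝ] EuclideanSpace ℝ (Fin n))
    (D : EuclideanSpace ℝ (Fin n)) (r δ : ℝ) (hr : 0 < r) (hδ : 0 < δ)
    (hC : ∀ j : ℕ, ‖C ^ j‖ ≤ r * Real.exp (-δ * j))
    (v : ℕ → ℝ) (Y : ℕ → EuclideanSpace ℝ (Fin n))
    (hY : ∀ k : ℕ, Y (k + 1) = C (Y k) + v k • D)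
    (vlim : ℝ) (hv : Filter.Tendsto v Filter.atTop (nhds vlim)) :
    IsUnit (1 - C) ∧
      Filter.Tendsto Y Filter.atTop (nhds (Ring.inverse (1 - C) (vlim • D))) := by
  -- find m with ‖C^m‖ < 1
  have hlim : Tendsto (fun m : ℕ => r * Real.exp (-δ) ^ m) atTop (nhds 0) := by
    simpa using (tendsto_pow_atTop_nhds_zero_of_lt_one (Real.exp_pos _).le
      (by rw [Real.exp_lt_one_iff]; linarith)).const_mul r
  obtain ⟨m, hm⟩ := (hlim.eventually (eventually_lt_nhds (by norm_num : (0:ℝ) < 1))).exists_forall_of_atTop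
  have hCm : ‖C ^ m‖ < 1 := by
    refine lt_of_le_of_lt (le_trans (hC m) ?_) (hm m le_rfl)
    rw [← Real.exp_nat_mul, mul_comm (m:ℝ) (-δ)]
  have hum : IsUnit (1 - C ^ m) := isUnit_one_sub_of_norm_lt_one hCm
  -- 1 - C is unit
  have hCommCS : Commute C (∑ i ∈ range m, C ^ i) :=
    Commute.sum_right _ _ _ fun i _ => (Commute.refl C).pow_right i
  have hunit : IsUnit (1 - C) := by
    obtain ⟨w, hw⟩ := hum
    set S := ∑ i ∈ range m, C ^ i with hS
    have h1 : (1 - C) * S = 1 - C ^ m := mul_neg_geom_sum C m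
    have h2 : S * (1 - C) = 1 - C ^ m := geom_sum_mul_neg C m
    have hcomm : Commute S ((w : _) : EuclideanSpace ℝ (Fin n) →L[ℝ] EuclideanSpace ℝ (Fin n)) := by
      rw [hw]
      exact (Commute.one_right S).sub_right (hCommCS.symm.pow_right m)
    have hcommInv : Commute S ((↑w⁻¹ : _)) := hcomm.units_inv_right
    rw [isUnit_iff_exists]
    refine ⟨S * ↑w⁻¹, ?_, ?_⟩
    · rw [← mul_assoc, h1, ← hw, Units.mul_inv]
    · rw [hcommInv.eq, mul_assoc, h2, ← hw, Units.inv_mul]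
  refine ⟨hunit, ?_⟩
  set L := Ring.inverse (1 - C) (vlim • D) with hLdef
  have hfix : (1 - C) L = vlim • D := by
    have : ((1 - C) * Ring.inverse (1 - C)) (vlim • D) = vlim • D := by
      rw [Ring.mul_inverse_cancel _ hunit, ContinuousLinearMap.one_apply]
    rwa [ContinuousLinearMap.mul_apply] at this
  have hL : L = C L + vlim • D := by
    have h := hfix
    rw [ContinuousLinearMap.sub_apply, ContinuousLinearMap.one_apply] at h
    rw [← h]; abel
  have hE : ∀ k, (fun k => Y k - L) (k + 1) = C ((fun k => Y k - L) k) + (v k - vlim) • D := by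
    intro k
    simp only
    calc Y (k + 1) - L = C (Y k) + v k • D - (C L + vlim • D) := by rw [hY k, ← hL]
      _ = C (Y k - L) + (v k - vlim) • D := by rw [map_sub, sub_smul]; abel
  have hu : Tendsto (fun k => (v k - vlim) • D) atTop (nhds 0) := by
    have h := (hv.sub_const vlim).smul_const D
    simpa using h
  have hEto := decay_lemma C r δ hr hδ hC (fun k => (v k - vlim) • D) hu (fun k => Y k - L) hE
  have : Tendsto (fun k => (Y k - L) + L) atTop (nhds (0 + L)) := hEto.add_const L
  simpa using this
end

section
/- Let N be a positive integer, let h_1, …, h_N : ℝ → ℝ be continuous, strictly increasing functions each with range all of ℝ, let α_1, …, α_N be positive reals and c ∈ ℝ. Then there exists a unique vector (u_1, …, u_N) ∈ ℝ^N such that h_1(u_1) = h_2(u_2) = ⋯ = h_N(u_N) and α_1 u_1 + ⋯ + α_N u_N = c. In particular (taking all α_i = 1), the set J = { u ∈ ℝ^N : h_1(u_1) = ⋯ = h_N(u_N) } intersects each hyperplane { u : u_1 + ⋯ + u_N = c } in exactly one point. -/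
open Filter

/-- Lemma 3 (SingleRoot): if each `h i : ℝ → ℝ` is continuous, strictly increasing
and surjective, `α i > 0` and `c ∈ ℝ`, then there is a unique `u ∈ ℝ^N` with
`h 1 (u 1) = ⋯ = h N (u N)` and `∑ i, α i * u i = c`. -/
theorem single_root (N : ℕ) (hN : 0 < N) (h : Fin N → ℝ → ℝ)
    (hcont : ∀ i, Continuous (h i)) (hmono : ∀ i, StrictMono (h i))
    (hsurj : ∀ i, Function.Surjective (h i))
    (α : Fin N → ℝ) (hα : ∀ i, 0 < α i) (c : ℝ) :
    ∃! u : Fin N → ℝ,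
      (∀ i j : Fin N, h i (u i) = h j (u j)) ∧ ∑ i, α i * u i = c := by
  have i0 : Fin N := ⟨0, hN⟩
  set e : Fin N → (ℝ ≃o ℝ) := fun i =>
    StrictMono.orderIsoOfSurjective (h i) (hmono i) (hsurj i) with he
  set g : Fin N → ℝ → ℝ := fun i => (e i).symm with hg
  have hgh : ∀ i t, h i (g i t) = t := fun i t => by
    have := (e i).apply_symm_apply t
    rwa [show ((e i) : ℝ → ℝ) = h i from StrictMono.coe_orderIsoOfSurjective _ _ _] at this
  have hhg : ∀ i x, g i (h i x) = x := fun i x => by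
    have := (e i).symm_apply_apply x
    rwa [show ((e i) : ℝ → ℝ) = h i from StrictMono.coe_orderIsoOfSurjective _ _ _] at this
  have hg_mono : ∀ i, StrictMono (g i) := fun i => (e i).symm.strictMono
  have hg_cont : ∀ i, Continuous (g i) := fun i => (e i).symm.continuous
  have hg_surj : ∀ i, Function.Surjective (g i) := fun i => (e i).symm.surjective
  set F : ℝ → ℝ := fun t => ∑ i, α i * g i t with hF
  have hF_mono : StrictMono F := by
    intro a b hab
    apply Finset.sum_lt_sum
    · intro i _
      exact mul_le_mul_of_nonneg_left ((hg_mono i).le_iff_le.mpr hab.le) (hα i).le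
    · exact ⟨i0, Finset.mem_univ _,
        mul_lt_mul_of_pos_left (hg_mono i0 hab) (hα i0)⟩
  have hF_cont : Continuous F :=
    continuous_finset_sum _ fun i _ => continuous_const.mul (hg_cont i)
  have hterm_top : ∀ i, Tendsto (fun t => α i * g i t) atTop atTop := fun i =>
    (tendsto_atTop_atTop_of_monotone (hg_mono i).monotone
      fun b => (hg_surj i b).imp fun a ha => ha.ge).const_mul_atTop (hα i)
  have hterm_bot : ∀ i, Tendsto (fun t => α i * g i t) atBot atBot := fun i =>
    (tendsto_atBot_atBot_of_monotone (hg_mono i).monotone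
      fun b => (hg_surj i b).imp fun a ha => ha.le).const_mul_atBot (hα i)
  have hF_top : Tendsto F atTop atTop := by
    have : Tendsto (fun t => α i0 * g i0 t + ∑ i ∈ Finset.univ.erase i0, α i * g i 0)
        atTop atTop := tendsto_atTop_add_const_right _ _ (hterm_top i0)
    apply tendsto_atTop_mono' _ _ this
    filter_upwards [eventually_ge_atTop (0:ℝ)] with t ht
    rw [show F t = ∑ i, α i * g i t from rfl,
      ← Finset.add_sum_erase _ _ (Finset.mem_univ i0)]
    gcongr with i hi
    · exact (hα i).le
    · exact (hg_mono i).monotone ht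
  have hF_bot : Tendsto F atBot atBot := by
    have : Tendsto (fun t => α i0 * g i0 t + ∑ i ∈ Finset.univ.erase i0, α i * g i 0)
        atBot atBot := tendsto_atBot_add_const_right _ _ (hterm_bot i0)
    apply tendsto_atBot_mono' _ _ this
    filter_upwards [eventually_le_atBot (0:ℝ)] with t ht
    rw [show F t = ∑ i, α i * g i t from rfl,
      ← Finset.add_sum_erase _ _ (Finset.mem_univ i0)]
    gcongr with i hi
    · exact (hα i).le
    · exact (hg_mono i).monotone ht
  obtain ⟨t, ht⟩ := (hF_cont.surjective hF_top hF_bot) c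
  refine ⟨fun i => g i t, ⟨fun i j => by rw [hgh, hgh], ht⟩, ?_⟩
  rintro u ⟨hu1, hu2⟩
  have hu : ∀ i, u i = g i (h i0 (u i0)) := fun i => by
    rw [← hu1 i i0, hhg]
  have hFs : F (h i0 (u i0)) = c := by
    rw [← hu2]
    exact Finset.sum_congr rfl fun i _ => by rw [← hu i]
  have : h i0 (u i0) = t := hF_mono.injective (hFs.trans ht.symm)
  funext i
  rw [hu i, this]
end
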